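/- Let 0 < τ < α < 1 and define h(t) = max(|t|^τ − 1, 0) for t ∈ ℝ. Then for every t ∈ ℝ the integral (α/Γ(1−α)) ∫_{−∞}^t (h(t) − h(s))/(t−s)^{1+α} ds is bounded below by −c for a finite constant c depending only on τ and α; i.e., the one-sided fractional derivative of h of order α is bounded below uniformly in t. -/

import Mathlib

open MeasureTheory Set

private lemma stmt17_bern {τ : ℝ} (hτ0 : 0 ≤ τ) (hτ1 : τ ≤ 1) {a b : ℝ} (hb : 1 ≤ b)
    (hba : b ≤ a) : a ^ τ - b ^ τ ≤ τ * (a - b) := by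
  have hb0 : (0:ℝ) < b := lt_of_lt_of_le one_pos hb
  have hab0 : 0 ≤ (a - b) / b := div_nonneg (by linarith) hb0.le
  have h1 : a ^ τ = b ^ τ * (1 + (a - b) / b) ^ τ := by
    rw [← Real.mul_rpow hb0.le (by linarith)]
    congr 1
    field_simp
    ring
  have h2 : (1 + (a - b) / b) ^ τ ≤ 1 + τ * ((a - b) / b) :=
    rpow_one_add_le_one_add_mul_self (by linarith) hτ0 hτ1
  have hbτ : 0 < b ^ τ := Real.rpow_pos_of_pos hb0 τ
  have h3 : a ^ τ ≤ b ^ τ + τ * (a - b) * b ^ (τ - 1) := by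
    calc a ^ τ = b ^ τ * (1 + (a - b) / b) ^ τ := h1
      _ ≤ b ^ τ * (1 + τ * ((a - b) / b)) := by
          exact mul_le_mul_of_nonneg_left h2 hbτ.le
      _ = b ^ τ + τ * (a - b) * b ^ (τ - 1) := by
          rw [Real.rpow_sub hb0, Real.rpow_one]
          field_simp
  have h4 : b ^ (τ - 1) ≤ 1 := Real.rpow_le_one_of_one_le_of_nonpos hb (by linarith)
  have h5 : 0 ≤ τ * (a - b) := mul_nonneg hτ0 (by linarith)
  nlinarith

private lemma stmt17_subadd {τ : ℝ} (hτ0 : 0 ≤ τ) (hτ1 : τ ≤ 1) {x y : ℝ} (hx : 0 ≤ x)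
    (hy : 0 ≤ y) : (x + y) ^ τ ≤ x ^ τ + y ^ τ := by
  have h := NNReal.rpow_add_le_add_rpow x.toNNReal y.toNNReal hτ0 hτ1
  have h2 := NNReal.coe_le_coe.2 h
  push_cast at h2
  rwa [Real.coe_toNNReal _ hx, Real.coe_toNNReal _ hy] at h2

private lemma stmt17_cov_integrableOn (c a : ℝ) (f : ℝ → ℝ) :
    IntegrableOn (fun s => f (c - s)) (Iio a) ↔ IntegrableOn f (Ioi (c - a)) := by
  have h1 : MeasurePreserving (fun s : ℝ => c - s) volume volume :=
    Measure.measurePreserving_sub_left volume c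
  have h2 : MeasurableEmbedding (fun s : ℝ => c - s) :=
    (MeasurableEquiv.subLeft c).measurableEmbedding
  have h3 : (fun s : ℝ => c - s) ⁻¹' (Ioi (c - a)) = Iio a := by
    ext s
    simp only [mem_preimage, mem_Ioi, mem_Iio]
    constructor <;> intro hs <;> linarith
  have := h1.integrableOn_comp_preimage h2 (f := f) (s := Ioi (c - a))
  rw [h3] at this
  exact this

private lemma stmt17_cov_integral (c a : ℝ) (f : ℝ → ℝ) :
    ∫ s in Iio a, f (c - s) = ∫ x in Ioi (c - a), f x := by
  have h1 : MeasurePreserving (fun s : ℝ => c - s) volume volume :=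
    Measure.measurePreserving_sub_left volume c
  have h2 : MeasurableEmbedding (fun s : ℝ => c - s) :=
    (MeasurableEquiv.subLeft c).measurableEmbedding
  have h3 : (fun s : ℝ => c - s) ⁻¹' (Ioi (c - a)) = Iio a := by
    ext s
    simp only [mem_preimage, mem_Ioi, mem_Iio]
    constructor <;> intro hs <;> linarith
  have := h1.setIntegral_preimage_emb h2 f (Ioi (c - a))
  rw [h3] at this
  exact this

theorem stmt_17 (τ α : ℝ) (hτ0 : 0 < τ) (hτα : τ < α) (hα1 : α < 1)
    (h : ℝ → ℝ) (hdef : ∀ t : ℝ, h t = max (|t| ^ τ - 1) 0) :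
    ∃ c : ℝ, ∀ t : ℝ,
      -c ≤ (α / Real.Gamma (1 - α)) *
        ∫ s in Set.Iio t, (h t - h s) / (t - s) ^ (1 + α) := by
  have hα0 : 0 < α := hτ0.trans hτα
  have hτ1 : τ ≤ 1 := le_of_lt (hτα.trans hα1)
  have hΓ : 0 < Real.Gamma (1 - α) := Real.Gamma_pos_of_pos (by linarith)
  set K := α / Real.Gamma (1 - α) with hKdef
  have hK0 : 0 ≤ K := div_nonneg hα0.le hΓ.le
  set C : ℝ := τ / (1 - α) + 1 / (α - τ) with hCdef
  -- value of h
  have hval : ∀ x : ℝ, h x = max |x| 1 ^ τ - 1 := by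
    intro x
    rw [hdef]
    rcases le_total |x| 1 with hc | hc
    · rw [max_eq_right hc, Real.one_rpow]
      have h1 : |x| ^ τ ≤ 1 := Real.rpow_le_one (abs_nonneg x) hc hτ0.le
      rw [max_eq_right (by linarith)]
      ring
    · rw [max_eq_left hc]
      have h1 : (1:ℝ) ≤ |x| ^ τ := by
        calc (1:ℝ) = 1 ^ τ := (Real.one_rpow τ).symm
          _ ≤ |x| ^ τ := Real.rpow_le_rpow zero_le_one hc hτ0.le
      rw [max_eq_left (by linarith)]
  have hh0 : ∀ x : ℝ, 0 ≤ h x := by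
    intro x; rw [hdef]; exact le_max_right _ _
  -- Lipschitz
  have hLip : ∀ x y : ℝ, h x - h y ≤ τ * |x - y| := by
    intro x y
    rw [hval x, hval y]
    have hb1 : (1:ℝ) ≤ max |y| 1 := le_max_right _ _
    rcases le_total (max |x| 1) (max |y| 1) with hc | hc
    · have h1 : max |x| 1 ^ τ ≤ max |y| 1 ^ τ :=
        Real.rpow_le_rpow (by positivity) hc hτ0.le
      have h2 : 0 ≤ τ * |x - y| := mul_nonneg hτ0.le (abs_nonneg _)
      linarith
    · have h1 : max |x| 1 ^ τ - max |y| 1 ^ τ ≤ τ * (max |x| 1 - max |y| 1) :=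
        stmt17_bern hτ0.le hτ1 hb1 hc
      have h2 : max |x| 1 - max |y| 1 ≤ |x - y| := by
        have h3 := abs_max_sub_max_le_abs |x| |y| 1
        have h4 := abs_abs_sub_abs_le_abs_sub x y
        have h5 := le_abs_self (max |x| 1 - max |y| 1)
        linarith
      have h5 : τ * (max |x| 1 - max |y| 1) ≤ τ * |x - y| :=
        mul_le_mul_of_nonneg_left h2 hτ0.le
      linarith
  have hLip' : ∀ x y : ℝ, |h x - h y| ≤ τ * |x - y| := by
    intro x y
    rw [abs_le]
    constructor
    · have := hLip y x
      rw [abs_sub_comm] at this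
      linarith
    · exact hLip x y
  -- continuity / measurability of h
  have hcont : Continuous h := by
    have he : h = fun x => max |x| 1 ^ τ - 1 := funext hval
    rw [he]
    exact ((Real.continuous_rpow_const hτ0.le).comp
      (continuous_abs.max continuous_const)).sub continuous_const
  refine ⟨K * C, fun t => ?_⟩
  set m := max |t| 1 with hmdef
  have hm1 : (1:ℝ) ≤ m := le_max_right _ _
  have hmt : |t| ≤ m := le_max_left _ _
  have hmt' : -m ≤ t := by
    have := neg_abs_le t
    linarith
  have htm : t ≤ m := le_trans (le_abs_self t) hmt
  set g : ℝ → ℝ := fun s => (h t - h s) / (t - s) ^ (1 + α) with hgdef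
  have hgm : Measurable g := by
    exact (measurable_const.sub hcont.measurable).div
      ((measurable_const.sub measurable_id).pow measurable_const)
  set G : ℝ → ℝ := fun u => min (τ * u ^ (-α)) (u ^ (τ - 1 - α)) with hGdef
  have hGm : Measurable G :=
    (measurable_const.mul (measurable_id.pow measurable_const)).min
      (measurable_id.pow measurable_const)
  set B : ℝ → ℝ := indicator (Iio (-m)) (fun s => G (-m - s)) with hBdef
  -- basic fact: w / w^(1+α) ≤ w^(-α) for 0 ≤ w (equality except w = 0 trivial)
  have hdivkey : ∀ w : ℝ, 0 ≤ w → w / w ^ (1 + α) = w ^ (-α) := by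
    intro w hw
    rcases eq_or_lt_of_le hw with hw0 | hw0
    · rw [← hw0]
      rw [Real.zero_rpow (ne_of_gt (by linarith : (0:ℝ) < 1 + α)),
        Real.zero_rpow (ne_of_lt (by linarith : -α < 0))]
      simp
    · have := Real.rpow_sub hw0 1 (1 + α)
      rw [Real.rpow_one] at this
      rw [← this]
      congr 1
      ring
  -- integrability of g on Ioc (t-1) t
  have hint1 : IntegrableOn g (Ioc (t-1) t) := by
    have h1 : IntervalIntegrable (fun x : ℝ => x ^ (-α)) volume 0 1 :=
      intervalIntegral.intervalIntegrable_rpow' (by linarith)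
    have h2 := (h1.comp_sub_left t).symm
    have h3 : IntegrableOn (fun s : ℝ => (t - s) ^ (-α)) (Ioc (t-1) t) := by
      have := h2.1
      simpa using this
    have hD : IntegrableOn (fun s => τ * (t - s) ^ (-α)) (Ioc (t-1) t) := h3.const_mul τ
    refine Integrable.mono' hD hgm.aestronglyMeasurable ?_
    filter_upwards [ae_restrict_mem measurableSet_Ioc] with s hs
    have hs1 : t - 1 < s := hs.1
    have hs2 : s ≤ t := hs.2
    have hw : 0 ≤ t - s := by linarith
    have hnum : |h t - h s| ≤ τ * (t - s) := by
      have := hLip' t s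
      rwa [abs_of_nonneg hw] at this
    have hden : 0 ≤ (t - s) ^ (1 + α) := Real.rpow_nonneg hw _
    rw [Real.norm_eq_abs, hgdef]
    simp only
    rw [abs_div, abs_of_nonneg hden]
    calc |h t - h s| / (t - s) ^ (1 + α) ≤ (τ * (t - s)) / (t - s) ^ (1 + α) := by
          rcases eq_or_lt_of_le hden with hd0 | hd0
          · rw [← hd0]; simp
          · exact (div_le_div_iff_of_pos_right hd0).2 hnum
      _ = τ * ((t - s) / (t - s) ^ (1 + α)) := by ring
      _ = τ * (t - s) ^ (-α) := by rw [hdivkey _ hw]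
  -- integrability of g on Iio (t-1)
  have hint2 : IntegrableOn g (Iio (t-1)) := by
    set K2 := h t + |t| ^ τ with hK2def
    have hK2 : 0 ≤ K2 := add_nonneg (hh0 t) (Real.rpow_nonneg (abs_nonneg t) τ)
    have hD : IntegrableOn
        (fun s => K2 * (t - s) ^ (-(1+α)) + (t - s) ^ (τ - 1 - α)) (Iio (t-1)) := by
      have hcov := stmt17_cov_integrableOn t (t-1)
        (fun w => K2 * w ^ (-(1+α)) + w ^ (τ - 1 - α))
      rw [show t - (t-1) = 1 by ring] at hcov
      refine hcov.mpr ?_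
      exact ((integrableOn_Ioi_rpow_of_lt (by linarith) one_pos).const_mul K2).add
        (integrableOn_Ioi_rpow_of_lt (by linarith) one_pos)
    refine Integrable.mono' hD hgm.aestronglyMeasurable ?_
    filter_upwards [ae_restrict_mem measurableSet_Iio] with s hs
    have hs1 : s < t - 1 := hs
    have hw1 : (1:ℝ) < t - s := by linarith
    have hw0 : (0:ℝ) < t - s := by linarith
    have hden : 0 < (t - s) ^ (1 + α) := Real.rpow_pos_of_pos hw0 _
    have hhs : h s ≤ |t| ^ τ + (t - s) ^ τ := by
      have h1 : h s ≤ |s| ^ τ := by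
        rw [hdef]
        exact max_le (by linarith [Real.rpow_nonneg (abs_nonneg s) τ])
          (Real.rpow_nonneg (abs_nonneg s) τ)
      have h2 : |s| ≤ |t| + (t - s) := by
        rw [abs_le]
        constructor
        · have := neg_abs_le t
          linarith
        · have := le_abs_self t
          linarith
      have h3 : |s| ^ τ ≤ (|t| + (t - s)) ^ τ :=
        Real.rpow_le_rpow (abs_nonneg s) h2 hτ0.le
      have h4 : (|t| + (t - s)) ^ τ ≤ |t| ^ τ + (t - s) ^ τ :=
        stmt17_subadd hτ0.le hτ1 (abs_nonneg t) hw0.le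
      linarith
    have hnum : |h t - h s| ≤ K2 + (t - s) ^ τ := by
      rw [abs_sub_le_iff]
      constructor
      · have := hh0 s
        have h5 : h t ≤ K2 := by
          rw [hK2def]
          have := Real.rpow_nonneg (abs_nonneg t) τ
          linarith
        have h6 : (0:ℝ) ≤ (t - s) ^ τ := Real.rpow_nonneg hw0.le τ
        linarith
      · have := hh0 t
        rw [hK2def]
        linarith
    rw [Real.norm_eq_abs, hgdef]
    simp only
    rw [abs_div, abs_of_nonneg hden.le]
    calc |h t - h s| / (t - s) ^ (1 + α)
        ≤ (K2 + (t - s) ^ τ) / (t - s) ^ (1 + α) :=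
          (div_le_div_iff_of_pos_right hden).2 hnum
      _ = K2 / (t - s) ^ (1 + α) + (t - s) ^ τ / (t - s) ^ (1 + α) := add_div _ _ _
      _ = K2 * (t - s) ^ (-(1+α)) + (t - s) ^ (τ - 1 - α) := by
          rw [← Real.rpow_sub hw0]
          rw [show τ - (1 + α) = τ - 1 - α by ring]
          rw [Real.rpow_neg hw0.le, div_eq_mul_inv]
  -- total integrability of g on Iio t
  have hsing : IntegrableOn g {t-1} := by
    have hz : volume.restrict ({t-1} : Set ℝ) = 0 :=
      Measure.restrict_eq_zero.2 (measure_singleton _)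
    rw [IntegrableOn, hz]
    exact integrable_zero_measure
  have hint : IntegrableOn g (Iio t) := by
    have h1 : IntegrableOn g (Iic (t-1)) := by
      have : Iic (t-1) = Iio (t-1) ∪ {t-1} := by
        ext x
        simp only [mem_Iic, mem_union, mem_Iio, mem_singleton_iff]
        exact le_iff_lt_or_eq
      rw [this]
      exact hint2.union hsing
    have h2 : IntegrableOn g (Iic t) := by
      rw [← Set.Iic_union_Ioc_eq_Iic (by linarith : t - 1 ≤ t)]
      exact h1.union hint1
    exact h2.mono_set Iio_subset_Iic_self
  -- integrability of G on Ioc 0 1 and Ioi 1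
  have hD_Ioc : IntegrableOn (fun u : ℝ => τ * u ^ (-α)) (Ioc (0:ℝ) 1) :=
    ((intervalIntegral.intervalIntegrable_rpow' (by linarith)).1).const_mul τ
  have hD_Ioi : IntegrableOn (fun u : ℝ => u ^ (τ - 1 - α)) (Ioi (1:ℝ)) :=
    integrableOn_Ioi_rpow_of_lt (by linarith) one_pos
  have hG_Ioc : IntegrableOn G (Ioc (0:ℝ) 1) := by
    refine Integrable.mono' hD_Ioc hGm.aestronglyMeasurable ?_
    filter_upwards [ae_restrict_mem measurableSet_Ioc] with u hu
    have hu0 : 0 < u := hu.1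
    have hGn : 0 ≤ G u := le_min (mul_nonneg hτ0.le (Real.rpow_nonneg hu0.le _))
      (Real.rpow_nonneg hu0.le _)
    rw [Real.norm_eq_abs, abs_of_nonneg hGn]
    exact min_le_left _ _
  have hG_Ioi : IntegrableOn G (Ioi (1:ℝ)) := by
    refine Integrable.mono' hD_Ioi hGm.aestronglyMeasurable ?_
    filter_upwards [ae_restrict_mem measurableSet_Ioi] with u hu
    have hu0 : (0:ℝ) < u := lt_trans one_pos hu
    have hGn : 0 ≤ G u := le_min (mul_nonneg hτ0.le (Real.rpow_nonneg hu0.le _))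
      (Real.rpow_nonneg hu0.le _)
    rw [Real.norm_eq_abs, abs_of_nonneg hGn]
    exact min_le_right _ _
  have hG_int : IntegrableOn G (Ioi (0:ℝ)) := by
    rw [← Set.Ioc_union_Ioi_eq_Ioi (zero_le_one (α := ℝ))]
    exact hG_Ioc.union hG_Ioi
  -- integrability of B
  have hB_int : Integrable B := by
    rw [hBdef, integrable_indicator_iff measurableSet_Iio]
    have hcov := stmt17_cov_integrableOn (-m) (-m) G
    rw [show -m - (-m) = 0 by ring] at hcov
    exact hcov.mpr hG_int
  have hB_nonneg : ∀ s, 0 ≤ B s := by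
    intro s
    rw [hBdef]
    by_cases hs : s ∈ Iio (-m)
    · rw [indicator_of_mem hs]
      have hu0 : 0 < -m - s := by
        simp only [mem_Iio] at hs
        linarith
      exact le_min (mul_nonneg hτ0.le (Real.rpow_nonneg hu0.le _))
        (Real.rpow_nonneg hu0.le _)
    · rw [indicator_of_notMem hs]
  -- the integral of B is at most C
  have hB_le : ∫ s in Iio t, B s ≤ C := by
    have h1 : ∫ s in Iio t, B s ≤ ∫ s, B s :=
      setIntegral_le_integral hB_int (ae_of_all _ hB_nonneg)
    have h2 : ∫ s, B s = ∫ s in Iio (-m), G (-m - s) := by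
      rw [hBdef]
      exact integral_indicator measurableSet_Iio
    have h3 : ∫ s in Iio (-m), G (-m - s) = ∫ u in Ioi (0:ℝ), G u := by
      have := stmt17_cov_integral (-m) (-m) G
      rw [show -m - (-m) = 0 by ring] at this
      exact this
    have h4 : ∫ u in Ioi (0:ℝ), G u = (∫ u in Ioc (0:ℝ) 1, G u) + ∫ u in Ioi (1:ℝ), G u := by
      rw [← Set.Ioc_union_Ioi_eq_Ioi (zero_le_one (α := ℝ))]
      exact setIntegral_union (Set.Ioc_disjoint_Ioi le_rfl) measurableSet_Ioi hG_Ioc hG_Ioi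
    have h5 : ∫ u in Ioc (0:ℝ) 1, G u ≤ τ / (1 - α) := by
      have hb : ∫ u in Ioc (0:ℝ) 1, τ * u ^ (-α) = τ / (1 - α) := by
        rw [← intervalIntegral.integral_of_le zero_le_one]
        rw [intervalIntegral.integral_const_mul]
        rw [integral_rpow (Or.inl (by linarith))]
        rw [Real.one_rpow, Real.zero_rpow (by linarith : -α + 1 ≠ 0)]
        rw [show -α + 1 = 1 - α by ring]
        ring
      calc ∫ u in Ioc (0:ℝ) 1, G u ≤ ∫ u in Ioc (0:ℝ) 1, τ * u ^ (-α) :=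
            setIntegral_mono_on hG_Ioc hD_Ioc measurableSet_Ioc
              (fun u _ => min_le_left _ _)
        _ = τ / (1 - α) := hb
    have h6 : ∫ u in Ioi (1:ℝ), G u ≤ 1 / (α - τ) := by
      have hb : ∫ u in Ioi (1:ℝ), u ^ (τ - 1 - α) = 1 / (α - τ) := by
        rw [integral_Ioi_rpow_of_lt (by linarith) one_pos]
        rw [Real.one_rpow]
        rw [show τ - 1 - α + 1 = -(α - τ) by ring]
        rw [neg_div_neg_eq]
      calc ∫ u in Ioi (1:ℝ), G u ≤ ∫ u in Ioi (1:ℝ), u ^ (τ - 1 - α) :=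
            setIntegral_mono_on hG_Ioi hD_Ioi measurableSet_Ioi
              (fun u _ => min_le_right _ _)
        _ = 1 / (α - τ) := hb
    rw [hCdef]
    linarith
  -- pointwise lower bound: -B s ≤ g s on Iio t
  have hpt : ∀ s ∈ Iio t, -B s ≤ g s := by
    intro s hs
    have hst : s < t := hs
    by_cases hsm : s ∈ Iio (-m)
    · have hsm' : s < -m := hsm
      set u := -m - s with hudef
      have hu0 : 0 < u := by rw [hudef]; linarith
      have hBs : B s = min (τ * u ^ (-α)) (u ^ (τ - 1 - α)) := by
        rw [hBdef, indicator_of_mem hsm]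
      have habs : |s| = m + u := by
        rw [abs_of_neg (by linarith : s < 0), hudef]
        ring
      have hhs : h s = (m + u) ^ τ - 1 := by
        rw [hval s, max_eq_left (by rw [habs]; linarith), habs]
      have hht : h t = m ^ τ - 1 := by
        rw [hval t, hmdef]
      have hnum : h s - h t ≤ min (τ * u) (u ^ τ) := by
        rw [hhs, hht]
        refine le_min ?_ ?_
        · have := stmt17_bern hτ0.le hτ1 hm1 (by linarith : m ≤ m + u)
          have he : m + u - m = u := by ring
          rw [he] at this
          linarith
        · have := stmt17_subadd hτ0.le hτ1 (by linarith : (0:ℝ) ≤ m) hu0.le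
          linarith
      have hts : u ≤ t - s := by rw [hudef]; linarith
      have hpow : u ^ (1 + α) ≤ (t - s) ^ (1 + α) :=
        Real.rpow_le_rpow hu0.le hts (by linarith)
      have hpow0 : 0 < u ^ (1 + α) := Real.rpow_pos_of_pos hu0 _
      have hden : 0 < (t - s) ^ (1 + α) := Real.rpow_pos_of_pos (by linarith) _
      have hmin0 : 0 ≤ min (τ * u) (u ^ τ) :=
        le_min (mul_nonneg hτ0.le hu0.le) (Real.rpow_nonneg hu0.le _)
      have hg1 : -(min (τ * u) (u ^ τ) / (t - s) ^ (1 + α)) ≤ g s := by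
        show _ ≤ (h t - h s) / (t - s) ^ (1 + α)
        rw [← neg_div]
        exact (div_le_div_iff_of_pos_right hden).2 (by linarith)
      have hg2 : min (τ * u) (u ^ τ) / (t - s) ^ (1 + α) ≤
          min (τ * u) (u ^ τ) / u ^ (1 + α) :=
        div_le_div_of_nonneg_left hmin0 hpow0 hpow
      have heq : min (τ * u) (u ^ τ) / u ^ (1 + α) = B s := by
        rw [hBs]
        rw [← min_div_div_right hpow0.le]
        congr 1
        · rw [mul_div_assoc, hdivkey u hu0.le]
        · rw [← Real.rpow_sub hu0]
          rw [show τ - (1 + α) = τ - 1 - α by ring]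
      rw [← heq]
      linarith
    · have hBs : B s = 0 := by rw [hBdef, indicator_of_notMem hsm]
      have hsm' : -m ≤ s := by
        simp only [mem_Iio, not_lt] at hsm
        exact hsm
      have habs : |s| ≤ m := by
        rw [abs_le]
        exact ⟨by linarith, by linarith⟩
      have hhs : h s ≤ h t := by
        rw [hval s, hval t, ← hmdef]
        have h1 : max |s| 1 ≤ m := max_le habs hm1
        have h2 : max |s| 1 ^ τ ≤ m ^ τ :=
          Real.rpow_le_rpow (by positivity) h1 hτ0.le
        linarith
      have hden : 0 < (t - s) ^ (1 + α) := Real.rpow_pos_of_pos (by linarith) _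
      have hg0 : 0 ≤ g s := by
        rw [hgdef]
        exact div_nonneg (by linarith) hden.le
      rw [hBs]
      linarith
  -- conclude
  have hmain : -C ≤ ∫ s in Iio t, g s := by
    have h1 : ∫ s in Iio t, -B s ≤ ∫ s in Iio t, g s :=
      setIntegral_mono_on hB_int.neg.integrableOn hint measurableSet_Iio hpt
    have h2 : ∫ s in Iio t, -B s = -∫ s in Iio t, B s := by
      exact integral_neg B
    rw [h2] at h1
    linarith
  calc -(K * C) = K * (-C) := by ring
    _ ≤ K * ∫ s in Set.Iio t, (h t - h s) / (t - s) ^ (1 + α) :=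
        mul_le_mul_of_nonneg_left hmain hK0
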